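/- Let n ∈ ℕ, ε ≥ 0, and f : ℝ → ℝ satisfy |f(x+y) - f(x) - f(y)| < ε for all x, y ∈ ℝ. Assume the map (α, x) ↦ δ_α^{n+1} f(x) is locally bounded. Then there exist an n-th order derivation d : ℝ → ℝ and λ ∈ ℝ such that |f(x) - (d(x) + λx)| ≤ ε for all x ∈ ℝ. -/

import Mathlib

open Filter Topology

noncomputable def δ (α : ℝ) (f : ℝ → ℝ) : ℝ → ℝ := fun x => f (α * x) - α * f x

def IsDerivOfOrder (n : ℕ) (d : ℝ → ℝ) : Prop :=
  (∀ x y : ℝ, d (x + y) = d x + d y) ∧ d 1 = 0 ∧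
    ∀ l : List ℝ, l.length = n + 1 → ∀ x : ℝ, (l.foldr δ d) x = 0

namespace Stmt15


def Dl (β : ℝ) : AddMonoid.End (ℝ →+ ℝ) :=
  AddMonoidHom.mk' (fun g => AddMonoidHom.mk'
      (fun x => g (β * x) - β * g x)
      (by intro a b; show g (β*(a+b)) - β * g (a+b) = _; rw [mul_add, map_add, map_add]; ring))
    (by intro g h; apply AddMonoidHom.ext; intro x; simp; ring)

@[simp] lemma Dl_apply (β : ℝ) (g : ℝ →+ ℝ) (x : ℝ) :
    (Dl β g) x = g (β * x) - β * g x := rfl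

lemma end_ext {P Q : AddMonoid.End (ℝ →+ ℝ)} (h : ∀ g x, (P g) x = (Q g) x) : P = Q := by
  apply AddMonoidHom.ext; intro g; apply AddMonoidHom.ext; intro x; exact h g x

lemma mul_apply' (P Q : AddMonoid.End (ℝ →+ ℝ)) (g : ℝ →+ ℝ) : (P * Q) g = P (Q g) := rfl

lemma Dl_comm (β γ : ℝ) : (Dl β) * (Dl γ) = (Dl γ) * (Dl β) := by
  apply end_ext; intro g x
  simp [mul_apply']
  rw [show γ * (β * x) = β * (γ * x) by ring]
  ring

lemma Dl_add (β γ : ℝ) : Dl (β + γ) = Dl β + Dl γ := by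
  apply end_ext; intro g x
  have : ((Dl β + Dl γ) g) x = (Dl β g) x + (Dl γ g) x := rfl
  rw [this]
  simp [add_mul, map_add]
  ring

lemma Dl_natmul (t : ℕ) (α : ℝ) : Dl ((t : ℝ) * α) = t • Dl α := by
  apply end_ext; intro g x
  have h1 : ((t : ℝ) * α) * x = (t : ℕ) • (α * x) := by
    simp [nsmul_eq_mul]; ring
  have h2 : g (((t:ℝ) * α) * x) = (t:ℝ) * g (α * x) := by
    rw [h1, map_nsmul, nsmul_eq_mul]
  have h3 : ((t • Dl α) g) x = t • ((Dl α g) x) := rfl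
  rw [h3]
  simp [h2, nsmul_eq_mul]
  ring

lemma binom (s : ℕ) (α β : ℝ) (t : ℕ) (g : ℝ →+ ℝ) (x : ℝ) :
    (((Dl (β + (t:ℝ) * α))^(s+1)) g) x
      = ∑ j : Fin (s+2), ((s+1).choose (j:ℕ) : ℝ) * ((t:ℕ):ℝ)^(j:ℕ)
          * ((((Dl α)^(j:ℕ) * (Dl β)^(s+1-(j:ℕ))) g) x) := by
  rw [Dl_add, Dl_natmul]
  have hc : Commute ((t:ℕ) • Dl α) (Dl β) := by
    rw [nsmul_eq_mul]
    exact Commute.mul_left (Nat.cast_commute t (Dl β)) (Dl_comm α β)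
  rw [add_comm (Dl β), hc.add_pow]
  erw [AddMonoidHom.finset_sum_apply, AddMonoidHom.finset_sum_apply]
  rw [Fin.sum_univ_eq_sum_range
    (fun j => ((s+1).choose j : ℝ) * ((t:ℕ):ℝ)^j * ((((Dl α)^j * (Dl β)^(s+1-j)) g) x))]
  apply Finset.sum_congr rfl
  intro k _
  rw [smul_pow, smul_mul_assoc]
  have h1 : ∀ (P : AddMonoid.End (ℝ →+ ℝ)) (c : ℕ),
      ((P * (c : AddMonoid.End (ℝ →+ ℝ))) g) x = c • ((P g) x) := by
    intro P c
    rw [mul_apply']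
    have : ((c : AddMonoid.End (ℝ →+ ℝ)) g) = c • g := by simp
    rw [this, map_nsmul]
    rfl
  have h2 : ((t ^ k • ((Dl α) ^ k * (Dl β) ^ (s + 1 - k)) *
      ((s+1).choose k : AddMonoid.End (ℝ →+ ℝ))) g) x
      = t^k • (((s+1).choose k) • ((((Dl α)^k * (Dl β)^(s+1-k)) g) x)) := by
    rw [smul_mul_assoc]
    have h3 : ((t^k • ((Dl α) ^ k * (Dl β) ^ (s + 1 - k) * ((s+1).choose k : AddMonoid.End (ℝ →+ ℝ)))) g) x
        = t^k • ((((Dl α) ^ k * (Dl β) ^ (s + 1 - k) * ((s+1).choose k : AddMonoid.End (ℝ →+ ℝ))) g) x) := rfl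
    rw [h3, h1]
  erw [h2]
  simp [nsmul_eq_mul]
  ring


lemma vand (s : ℕ) : ∃ c : Fin (s+2) → ℝ, ∀ v : Fin (s+2) → ℝ,
    v 1 = ∑ t : Fin (s+2), c t * (∑ j : Fin (s+2), ((s+1).choose (j:ℕ) : ℝ) * ((t:ℕ):ℝ)^(j:ℕ) * v j) := by
  set M : Matrix (Fin (s+2)) (Fin (s+2)) ℝ :=
    Matrix.of fun t j => ((s+1).choose (j:ℕ) : ℝ) * ((t:ℕ):ℝ)^(j:ℕ) with hM
  have hdet : IsUnit M.det := by
    have hfac : M = (Matrix.vandermonde fun t : Fin (s+2) => ((t:ℕ):ℝ)) *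
        Matrix.diagonal (fun j : Fin (s+2) => ((s+1).choose (j:ℕ) : ℝ)) := by
      ext t j
      simp [Matrix.mul_diagonal, Matrix.vandermonde, hM, mul_comm]
    rw [hfac, Matrix.det_mul, Matrix.det_diagonal]
    apply IsUnit.mul
    · rw [isUnit_iff_ne_zero, Matrix.det_vandermonde_ne_zero_iff]
      intro i j hij
      exact Fin.val_injective (Nat.cast_injective hij)
    · rw [isUnit_iff_ne_zero]
      apply Finset.prod_ne_zero_iff.mpr
      intro j _
      have := Nat.choose_pos (show (j:ℕ) ≤ s+1 from Nat.lt_succ_iff.mp j.isLt)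
      positivity
  refine ⟨fun t => M⁻¹ 1 t, fun v => ?_⟩
  have h1 : M.mulVec v = fun t : Fin (s+2) => ∑ j : Fin (s+2), ((s+1).choose (j:ℕ) : ℝ) * ((t:ℕ):ℝ)^(j:ℕ) * v j := by
    funext t; simp [Matrix.mulVec, dotProduct, hM]
  have h2 : M⁻¹.mulVec (M.mulVec v) = v := by
    rw [Matrix.mulVec_mulVec, Matrix.nonsing_inv_mul M hdet, Matrix.one_mulVec]
  calc v 1 = (M⁻¹.mulVec (M.mulVec v)) 1 := by rw [h2]
    _ = ∑ t, M⁻¹ 1 t * (M.mulVec v) t := by simp [Matrix.mulVec, dotProduct]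
    _ = _ := by rw [h1]

def DiagBound (m : ℕ) (g : ℝ →+ ℝ) : Prop :=
  ∀ r : ℝ, 1 ≤ r → ∃ C : ℝ, ∀ β x : ℝ, |β| ≤ r → |x| ≤ r → |(((Dl β)^m) g) x| ≤ C

lemma step {m : ℕ} {g : ℝ →+ ℝ} (hg : DiagBound (m+1) g) (α : ℝ) :
    DiagBound m (Dl α g) := by
  obtain ⟨c, hc⟩ := vand m
  intro r hr
  obtain ⟨C, hC⟩ := hg (r + (m+1) * (|α| + 1)) (by nlinarith [abs_nonneg α])
  have hR : (0:ℝ) ≤ r + (↑m + 1) * (|α| + 1) := by nlinarith [abs_nonneg α]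
  have hC0 : 0 ≤ C := le_trans (abs_nonneg _) (hC 0 0 (by simpa using hR) (by simpa using hR))
  refine ⟨(∑ t : Fin (m+2), |c t|) * C, ?_⟩
  intro β x hβ hx
  set v : Fin (m+2) → ℝ := fun j => ((((Dl α)^(j:ℕ) * (Dl β)^(m+1-(j:ℕ))) g) x) with hv
  have key : (((Dl β)^m) (Dl α g)) x = v 1 := by
    have hcm : Commute (Dl α) ((Dl β)^m) := Commute.pow_right (Dl_comm α β) m
    have : v 1 = ((Dl α * (Dl β)^m) g) x := by
      rw [hv]
      simp only [Fin.val_one, pow_one, Nat.add_sub_cancel]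
    rw [this, hcm.eq, mul_apply']
  have hψ : ∀ t : Fin (m+2),
      |∑ j : Fin (m+2), ((m+1).choose (j:ℕ) : ℝ) * ((t:ℕ):ℝ)^(j:ℕ) * v j| ≤ C := by
    intro t
    rw [← binom m α β (t:ℕ) g x]
    apply hC
    · have ht : ((t:ℕ):ℝ) ≤ (m:ℝ) + 1 := by
        have := Fin.is_le t
        exact_mod_cast Nat.cast_le.mpr this
      have : |β + ((t:ℕ):ℝ) * α| ≤ |β| + ((t:ℕ):ℝ) * |α| := by
        refine le_trans (abs_add_le _ _) ?_
        rw [abs_mul, Nat.abs_cast]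
      have htn : (0:ℝ) ≤ ((t:ℕ):ℝ) := Nat.cast_nonneg _
      nlinarith [abs_nonneg α, abs_nonneg β]
    · nlinarith [abs_nonneg α]
  rw [key, hc v]
  refine le_trans (Finset.abs_sum_le_sum_abs _ _) ?_
  rw [Finset.sum_mul]
  apply Finset.sum_le_sum
  intro t _
  rw [abs_mul]
  exact mul_le_mul_of_nonneg_left (hψ t) (abs_nonneg _)



lemma lin_of_bounded (g : ℝ →+ ℝ) (C : ℝ) (hC : ∀ x : ℝ, |x| ≤ 1 → |g x| ≤ C) :
    ∀ x : ℝ, g x = g 1 * x := by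
  intro x
  have hz : ∀ n : ℕ, 1 ≤ n → |g x - g 1 * x| ≤ (C + |g 1|) / n := by
    intro n hn
    have hn' : (0:ℝ) < n := by exact_mod_cast hn
    obtain ⟨q, hq⟩ := exists_rat_near x (show (0:ℝ) < 1/n by positivity)
    set y : ℝ := x - q with hy
    have hyb : |y| ≤ 1 / n := le_of_lt hq
    have hgq : g (q:ℝ) = (q:ℝ) * g 1 := by
      have h := map_rat_smul g q (1:ℝ)
      rw [Rat.smul_def, mul_one, Rat.smul_def] at h
      rw [h]
    have hgy : |g y| ≤ C / n := by
      have h1 : y = (1/(n:ℚ)) • ((n:ℚ) • y) := by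
        rw [smul_smul]
        rw [show (1/(n:ℚ)) * (n:ℚ) = 1 by
          field_simp]
        rw [one_smul]
      have h2 : |(n:ℚ) • y| ≤ 1 := by
        rw [Rat.smul_def]
        rw [abs_mul]
        push_cast
        rw [Nat.abs_cast]
        calc (n:ℝ) * |y| ≤ (n:ℝ) * (1/n) := by
              exact mul_le_mul_of_nonneg_left hyb (le_of_lt hn')
          _ = 1 := by field_simp
      have h3 : g y = (1/(n:ℚ)) • g ((n:ℚ) • y) := by
        conv_lhs => rw [h1, map_rat_smul]
      rw [h3, Rat.smul_def]
      rw [abs_mul]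
      have h4 : |((1/(n:ℚ) : ℚ) : ℝ)| = 1/n := by
        push_cast
        rw [abs_of_nonneg (by positivity)]
      rw [h4]
      calc 1/(n:ℝ) * |g ((n:ℚ) • y)| ≤ 1/n * C := by
            exact mul_le_mul_of_nonneg_left (hC _ h2) (by positivity)
        _ = C / n := by ring
    have hdecomp : g x - g 1 * x = g y - g 1 * y := by
      have : g x = g y + g (q:ℝ) := by
        rw [← map_add]
        congr 1
        rw [hy]; ring
      rw [this, hgq, hy]; ring
    rw [hdecomp]
    calc |g y - g 1 * y| ≤ |g y| + |g 1| * |y| := by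
          refine le_trans (abs_sub _ _) ?_
          rw [abs_mul]
      _ ≤ C / n + |g 1| * (1/n) := by
          refine add_le_add hgy ?_
          exact mul_le_mul_of_nonneg_left hyb (abs_nonneg _)
      _ = (C + |g 1|) / n := by ring
  have h0 : |g x - g 1 * x| ≤ 0 := by
    refine ge_of_tendsto (tendsto_const_div_atTop_nhds_zero_nat (C + |g 1|)) ?_
    filter_upwards [Filter.eventually_ge_atTop 1] with n hn
    exact hz n hn
  have := abs_nonneg (g x - g 1 * x)
  have : |g x - g 1 * x| = 0 := le_antisymm h0 this
  have := abs_eq_zero.mp this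
  linarith [this]


lemma hyers (ε : ℝ) (hε : 0 ≤ ε) (f : ℝ → ℝ)
    (h : ∀ x y : ℝ, |f (x + y) - f x - f y| ≤ ε) :
    ∃ a : ℝ →+ ℝ, ∀ x, |f x - a x| ≤ ε := by
  set seq : ℝ → ℕ → ℝ := fun x k => f (2^k * x) / 2^k with hseq
  have h2k : ∀ k : ℕ, (0:ℝ) < 2^k := fun k => by positivity
  have hstep : ∀ y : ℝ, |f (2 * y) - 2 * f y| ≤ ε := by
    intro y
    have := h y y
    rw [show y + y = 2 * y by ring] at this
    calc |f (2*y) - 2 * f y| = |f (2*y) - f y - f y| := by ring_nf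
      _ ≤ ε := this
  have hd : ∀ x k, dist (seq x k) (seq x (k+1)) ≤ (ε/2) * (1/2)^k := by
    intro x k
    rw [Real.dist_eq]
    have e1 : seq x k - seq x (k+1) = (2 * f (2^k * x) - f (2 * (2^k * x))) / 2^(k+1) := by
      rw [hseq]
      simp only []
      rw [show (2:ℝ)^(k+1) * x = 2 * (2^k * x) by ring]
      field_simp
      ring
    rw [e1, abs_div, abs_of_pos (h2k (k+1))]
    rw [div_le_iff₀ (h2k (k+1))]
    have := hstep (2^k * x)
    calc |2 * f (2^k*x) - f (2 * (2^k*x))| = |f (2 * (2^k*x)) - 2 * f (2^k*x)| := by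
          rw [abs_sub_comm]
      _ ≤ ε := this
      _ = (ε/2) * (1/2)^k * 2^(k+1) := by
          have hhalf : ((1:ℝ)/2)^k * 2^k = 1 := by rw [← mul_pow]; norm_num
          linear_combination (-ε) * hhalf
  have hc : ∀ x, CauchySeq (seq x) :=
    fun x => cauchySeq_of_le_geometric (1/2) (ε/2) (by norm_num) (hd x)
  obtain ⟨aF, haF⟩ : ∃ aF : ℝ → ℝ, ∀ x, Tendsto (seq x) atTop (𝓝 (aF x)) :=
    ⟨fun x => (cauchySeq_tendsto_of_complete (hc x)).choose,
     fun x => (cauchySeq_tendsto_of_complete (hc x)).choose_spec⟩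
  have hpow : Tendsto (fun k : ℕ => ((1:ℝ)/2)^k) atTop (𝓝 0) :=
    tendsto_pow_atTop_nhds_zero_of_lt_one (by norm_num) (by norm_num)
  have hadd : ∀ x y, aF (x + y) = aF x + aF y := by
    intro x y
    have hsum : Tendsto (fun k => seq x k + seq y k) atTop (𝓝 (aF x + aF y)) :=
      (haF x).add (haF y)
    have hub : ∀ k, |seq (x+y) k - (seq x k + seq y k)| ≤ ε * (1/2)^k := by
      intro k
      have e1 : seq (x+y) k - (seq x k + seq y k)
          = (f (2^k * x + 2^k * y) - f (2^k * x) - f (2^k * y)) / 2^k := by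
        rw [hseq]; simp only []
        rw [show (2:ℝ)^k * (x+y) = 2^k * x + 2^k * y by ring]
        field_simp
        ring
      rw [e1, abs_div, abs_of_pos (h2k k), div_le_iff₀ (h2k k)]
      calc |f (2^k * x + 2^k * y) - f (2^k * x) - f (2^k * y)| ≤ ε := h _ _
        _ ≤ ε * (1/2)^k * 2^k := by
          have hhalf : ((1:ℝ)/2)^k * 2^k = 1 := by rw [← mul_pow]; norm_num
          rw [mul_assoc, hhalf, mul_one]
    have h0 : Tendsto (fun k => seq (x+y) k - (seq x k + seq y k)) atTop (𝓝 0) := by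
      apply squeeze_zero_norm hub
      simpa using hpow.const_mul ε
    have : Tendsto (seq (x+y)) atTop (𝓝 (aF x + aF y)) := by
      simpa using h0.add hsum
    exact tendsto_nhds_unique (haF (x+y)) this
  have hbound : ∀ x, |f x - aF x| ≤ ε := by
    intro x
    have hb : ∀ k, |seq x k - f x| ≤ (1 - (1/2)^k) * ε := by
      intro k
      induction k with
      | zero =>
        rw [hseq]; norm_num
      | succ k ih =>
        have h1 : |seq x (k+1) - seq x k| ≤ (ε/2) * (1/2)^k := by
          rw [abs_sub_comm]
          exact (Real.dist_eq _ _ ▸ hd x k)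
        calc |seq x (k+1) - f x| ≤ |seq x (k+1) - seq x k| + |seq x k - f x| := abs_sub_le _ _ _
          _ ≤ (ε/2) * (1/2)^k + (1 - (1/2)^k) * ε := add_le_add h1 ih
          _ = (1 - (1/2)^(k+1)) * ε := by ring
    have hb' : ∀ k, |seq x k - f x| ≤ ε := by
      intro k
      refine le_trans (hb k) ?_
      have h1 : (1:ℝ) - (1/2)^k ≤ 1 := by
        have : (0:ℝ) ≤ (1/2)^k := by positivity
        linarith
      nlinarith
    have : Tendsto (fun k => |seq x k - f x|) atTop (𝓝 (|aF x - f x|)) :=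
      ((haF x).sub_const (f x)).abs
    have := le_of_tendsto' this hb'
    rwa [abs_sub_comm] at this
  exact ⟨AddMonoidHom.mk' aF hadd, hbound⟩


lemma coe_Dl (β : ℝ) (g : ℝ →+ ℝ) : ⇑(Dl β g) = δ β ⇑g := rfl

lemma coe_Dl_pow (β : ℝ) (k : ℕ) : ∀ g : ℝ →+ ℝ, ⇑(((Dl β)^k) g) = (δ β)^[k] ⇑g := by
  induction k with
  | zero => intro g; rfl
  | succ k ih =>
    intro g
    rw [pow_succ, mul_apply', ih (Dl β g), Function.iterate_succ_apply, coe_Dl]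

lemma coe_foldr (g : ℝ →+ ℝ) : ∀ l : List ℝ,
    ⇑(l.foldr (fun β h => Dl β h) g) = l.foldr δ ⇑g
  | [] => rfl
  | β :: l => by
    rw [List.foldr_cons, List.foldr_cons, ← coe_foldr g l, coe_Dl]

lemma delta_sub (β : ℝ) (u v : ℝ → ℝ) (k : ℕ) :
    (δ β)^[k] (fun y => u y - v y) = fun y => (δ β)^[k] u y - (δ β)^[k] v y := by
  induction k with
  | zero => rfl
  | succ k ih =>
    rw [Function.iterate_succ_apply', Function.iterate_succ_apply',
      Function.iterate_succ_apply', ih]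
    funext y
    simp only [δ]
    ring

lemma delta_bound (β : ℝ) (w : ℝ → ℝ) (c : ℝ) (hw : ∀ y, |w y| ≤ c) (k : ℕ) :
    ∀ x, |(δ β)^[k] w x| ≤ (1+|β|)^k * c := by
  induction k with
  | zero => intro x; simpa using hw x
  | succ k ih =>
    intro x
    rw [Function.iterate_succ_apply']
    show |(δ β)^[k] w (β * x) - β * (δ β)^[k] w x| ≤ _
    calc |(δ β)^[k] w (β * x) - β * (δ β)^[k] w x|
        ≤ |(δ β)^[k] w (β * x)| + |β| * |(δ β)^[k] w x| := by
          refine le_trans (abs_sub _ _) ?_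
          rw [abs_mul]
      _ ≤ (1+|β|)^k * c + |β| * ((1+|β|)^k * c) := by
          refine add_le_add (ih _) (mul_le_mul_of_nonneg_left (ih _) (abs_nonneg β))
      _ = (1+|β|)^(k+1) * c := by ring

end Stmt15

open Stmt15 in
theorem stmt_15 (n : ℕ) (ε : ℝ) (hε : 0 ≤ ε) (f : ℝ → ℝ)
    (h : ∀ x y : ℝ, |f (x + y) - f x - f y| < ε)
    (hlb : ∀ r : ℝ, 0 < r → ∃ C : ℝ, ∀ α x : ℝ, |α| ≤ r → |x| ≤ r →
      |((δ α)^[n + 1] f) x| ≤ C) :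
    ∃ (d : ℝ → ℝ) (lam : ℝ), IsDerivOfOrder n d ∧
      ∀ x : ℝ, |f x - (d x + lam * x)| ≤ ε := by
  obtain ⟨a, ha⟩ := hyers ε hε f (fun x y => le_of_lt (h x y))
  have hda : DiagBound (n+1) a := by
    intro r hr
    obtain ⟨C, hC⟩ := hlb r (lt_of_lt_of_le zero_lt_one hr)
    refine ⟨C + (1+r)^(n+1) * ε, ?_⟩
    intro β x hβ hx
    have hw : ∀ y, |(fun y => a y - f y) y| ≤ ε := by
      intro y; rw [abs_sub_comm]; exact ha y
    have hdiff : (fun y => (δ β)^[n+1] (⇑a) y - (δ β)^[n+1] f y)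
        = (δ β)^[n+1] (fun y => a y - f y) := (delta_sub β (⇑a) f (n+1)).symm
    have h1 : (((Dl β)^(n+1)) a) x = (δ β)^[n+1] (⇑a) x := by rw [coe_Dl_pow]
    have h2 : |(δ β)^[n+1] (⇑a) x - (δ β)^[n+1] f x| ≤ (1+|β|)^(n+1) * ε := by
      have := delta_bound β (fun y => a y - f y) ε hw (n+1) x
      rw [← hdiff] at this
      exact this
    have h3 : |(δ β)^[n+1] (⇑a) x| ≤ |(δ β)^[n+1] f x| + (1+|β|)^(n+1) * ε := by
      calc |(δ β)^[n+1] (⇑a) x|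
          = |(δ β)^[n+1] f x + ((δ β)^[n+1] (⇑a) x - (δ β)^[n+1] f x)| := by ring_nf
        _ ≤ |(δ β)^[n+1] f x| + |(δ β)^[n+1] (⇑a) x - (δ β)^[n+1] f x| := abs_add_le _ _
        _ ≤ _ := add_le_add le_rfl h2
    rw [h1]
    refine le_trans h3 (add_le_add (hC β x hβ hx) ?_)
    have hbb : (1+|β|)^(n+1) ≤ (1+r)^(n+1) :=
      pow_le_pow_left₀ (by positivity) (by linarith [abs_nonneg β]) _
    exact mul_le_mul_of_nonneg_right hbb hε
  have hfold : ∀ l : List ℝ, l.length ≤ n + 1 →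
      DiagBound (n + 1 - l.length) (l.foldr (fun β g => Dl β g) a) := by
    intro l
    induction l with
    | nil => intro _; simpa using hda
    | cons β l ih =>
      intro hlen
      rw [List.foldr_cons]
      have h1 : l.length ≤ n := by
        simp only [List.length_cons] at hlen; omega
      have h2 := ih (le_trans h1 (Nat.le_succ n))
      have h3 : n + 1 - l.length = (n - l.length) + 1 := by omega
      rw [h3] at h2
      have h4 : n + 1 - (β :: l).length = n - l.length := by
        simp only [List.length_cons]; omega
      rw [h4]
      exact step h2 β
  refine ⟨fun x => a x - a 1 * x, a 1, ⟨?_, ?_, ?_⟩, ?_⟩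
  · intro x y; simp only [map_add]; ring
  · simp
  · intro l hlen x
    cases l with
    | nil => simp at hlen
    | cons β l' =>
      have hlen' : l'.length = n := by
        simp only [List.length_cons] at hlen; omega
      set A : ℝ →+ ℝ := AddMonoidHom.mk' (fun x => a x - a 1 * x)
        (by intro u v; simp only [map_add]; ring) with hA
      have hcoeA : ⇑A = fun x => a x - a 1 * x := rfl
      have hfold_eq : (β :: l').foldr δ (fun x => a x - a 1 * x)
          = ⇑((β :: l').foldr (fun γ g => Dl γ g) A) := by
        rw [coe_foldr, hcoeA]
      have hDlA : ∀ γ : ℝ, Dl γ A = Dl γ a := by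
        intro γ
        apply AddMonoidHom.ext; intro z
        show A (γ * z) - γ * A z = a (γ * z) - γ * a z
        show (a (γ*z) - a 1 * (γ*z)) - γ * (a z - a 1 * z) = a (γ*z) - γ * a z
        ring
      have hAa : ∀ (m : List ℝ), m ≠ [] →
          m.foldr (fun γ g => Dl γ g) A = m.foldr (fun γ g => Dl γ g) a := by
        intro m
        induction m with
        | nil => intro hm; exact absurd rfl hm
        | cons γ m ihm =>
          intro _
          rw [List.foldr_cons, List.foldr_cons]
          by_cases hm : m = []
          · subst hm; simp only [List.foldr_nil]; exact hDlA γ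
          · rw [ihm hm]
      set h' : ℝ →+ ℝ := l'.foldr (fun γ g => Dl γ g) a with hh'
      have hd1 : DiagBound 1 h' := by
        have h6 := hfold l' (by omega)
        have h5 : n + 1 - l'.length = 1 := by omega
        rw [h5] at h6
        exact h6
      obtain ⟨C, hC⟩ := hd1 1 le_rfl
      set K : ℝ →+ ℝ := AddMonoidHom.mk' (fun γ => h' γ - γ * h' 1)
        (by intro u v; simp only [map_add]; ring) with hK
      have hKb : ∀ γ : ℝ, |γ| ≤ 1 → |K γ| ≤ C := by
        intro γ hγ
        have h7 := hC γ 1 hγ (by norm_num)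
        have e : (((Dl γ)^1) h') 1 = h' γ - γ * h' 1 := by
          rw [pow_one]
          show h' (γ * 1) - γ * h' 1 = _
          rw [mul_one]
        rw [e] at h7
        exact h7
      have hK1 : K 1 = 0 := by
        show h' 1 - 1 * h' 1 = 0; ring
      have hlin : ∀ γ, h' γ = γ * h' 1 := by
        intro γ
        have h8 := lin_of_bounded K C hKb γ
        rw [hK1, zero_mul] at h8
        have h9 : h' γ - γ * h' 1 = 0 := h8
        linarith
      rw [hfold_eq, hAa (β :: l') (by simp), List.foldr_cons]
      show h' (β * x) - β * h' x = 0
      rw [hlin (β * x), hlin x]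
      ring
  · intro x
    have := ha x
    calc |f x - ((a x - a 1 * x) + a 1 * x)| = |f x - a x| := by ring_nf
      _ ≤ ε := ha x
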